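/- If p is a rapid ultrafilter on ℕ and q is any ultrafilter on ℕ, then q + p is rapid, where q + p is the image of q ⊗ p under addition. -/

import Mathlib

def Rapid (p : Ultrafilter ℕ) : Prop :=
  ∀ f : ℕ → ℕ, ∃ A ∈ p, ∀ i : ℕ, 0 < i → ((A : Set ℕ) ∩ Set.Iio (f i)).ncard < i

/-- The tensor product `q ⊗ p`. -/
def tensor (q p : Ultrafilter ℕ) : Ultrafilter (ℕ × ℕ) :=
  q.bind fun m => p.map fun n => (m, n)

/-- `q + p` is the image of `q ⊗ p` under addition. -/
def addUF (q p : Ultrafilter ℕ) : Ultrafilter ℕ :=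
  (tensor q p).map fun z => z.1 + z.2

private lemma aux_pow (k : ℕ) : (k + 1) * k < 2 * 2 ^ k := by
  induction k with
  | zero => norm_num
  | succ k ih =>
    have h : k < 2 ^ k := Nat.lt_two_pow_self
    have : (k + 2) * (k + 1) = (k + 1) * k + 2 * (k + 1) := by ring
    calc (k + 1 + 1) * (k + 1) = (k + 1) * k + 2 * (k + 1) := by ring
      _ < 2 * 2 ^ k + 2 * (k + 1) := by omega
      _ ≤ 2 * 2 ^ k + 2 * 2 ^ k := by omega
      _ = 2 * 2 ^ (k + 1) := by ring

private lemma mem_addUF (q p : Ultrafilter ℕ) (A : Set ℕ)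
    (h : {m : ℕ | {n : ℕ | m + n ∈ A} ∈ p} ∈ q) : A ∈ addUF q p := by
  have : ((fun z : ℕ × ℕ => z.1 + z.2) ⁻¹' A) ∈
      Filter.bind (↑q) (fun m => ↑(Ultrafilter.map (fun n => ((m, n) : ℕ × ℕ)) p)) := by
    rw [Filter.mem_bind']
    refine Filter.mem_of_superset h ?_
    intro m hm
    simpa [Ultrafilter.mem_coe, Ultrafilter.mem_map, Set.preimage] using hm
  exact this

private lemma rapid_infinite {p : Ultrafilter ℕ} (hp : Rapid p) {S : Set ℕ} (hS : S ∈ p) :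
    S.Infinite := by
  by_contra hfin
  rw [Set.not_infinite] at hfin
  obtain ⟨M, hM⟩ := hfin.bddAbove
  obtain ⟨A, hA, hAcard⟩ := hp (fun _ => M + 1)
  have h1 := hAcard 1 one_pos
  have hAS : (A ∩ S : Set ℕ).Nonempty := Ultrafilter.nonempty_of_mem (p.inter_mem hA hS)
  obtain ⟨x, hxA, hxS⟩ := hAS
  have hx : x ∈ A ∩ Set.Iio (M + 1) := ⟨hxA, by simpa using Nat.lt_succ_of_le (hM hxS)⟩
  have hfin' : (A ∩ Set.Iio (M + 1)).Finite :=
    Set.Finite.subset (Set.finite_Iio _) (Set.inter_subset_right)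
  have : 0 < (A ∩ Set.Iio (M + 1)).ncard := (Set.ncard_pos hfin').2 ⟨x, hx⟩
  omega

theorem stmt_3 (p q : Ultrafilter ℕ) (hp : Rapid p) : Rapid (addUF q p) := by
  classical
  intro f
  set F : ℕ → ℕ := fun i => (Finset.range (i + 1)).sup f with hF
  obtain ⟨B, hBp, hB⟩ := hp (fun j => F (2 ^ j))
  set c : ℕ → ℕ := fun n => (B ∩ Set.Iio n).ncard with hc
  -- c is strictly monotone on B
  have hcmono : ∀ n ∈ B, ∀ n', n < n' → c n < c n' := by
    intro n hn n' hnn'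
    have hsub : insert n (B ∩ Set.Iio n) ⊆ B ∩ Set.Iio n' := by
      intro x hx
      rcases hx with rfl | ⟨hxB, hxlt⟩
      · exact ⟨hn, hnn'⟩
      · exact ⟨hxB, lt_trans hxlt hnn'⟩
    have hfin' : (B ∩ Set.Iio n' : Set ℕ).Finite :=
      Set.Finite.subset (Set.finite_Iio _) Set.inter_subset_right
    have hfin : (B ∩ Set.Iio n : Set ℕ).Finite :=
      Set.Finite.subset (Set.finite_Iio _) Set.inter_subset_right
    have h1 : (insert n (B ∩ Set.Iio n)).ncard = c n + 1 :=
      Set.ncard_insert_of_notMem (fun h => lt_irrefl n h.2) hfin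
    have h2 := Set.ncard_le_ncard hsub hfin'
    have h3 : (B ∩ Set.Iio n').ncard = c n' := rfl
    omega
  set A : Set ℕ := {k | ∃ n, n ∈ B ∧ n ≤ k ∧ k ≤ n + c n} with hA
  refine ⟨A, ?_, ?_⟩
  · -- A ∈ addUF q p
    apply mem_addUF
    have : ∀ m : ℕ, {n : ℕ | m + n ∈ A} ∈ p := by
      intro m
      have hDfin : {n ∈ B | c n < m}.Finite := by
        apply Set.Finite.of_finite_image (f := c)
        · exact Set.Finite.subset (Set.finite_Iio m) (by rintro _ ⟨n, ⟨_, hn⟩, rfl⟩; exact hn)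
        · intro a ha b hb hab
          by_contra hne
          rcases Nat.lt_or_ge a b with h | h
          · exact absurd hab (Nat.ne_of_lt (hcmono a ha.1 b h))
          · have : b < a := lt_of_le_of_ne h (Ne.symm hne)
            exact absurd hab.symm (Nat.ne_of_lt (hcmono b hb.1 a this))
      have hDnot : {n ∈ B | c n < m} ∉ p := fun h => (rapid_infinite hp h) hDfin
      have : B ∩ {n ∈ B | c n < m}ᶜ ∈ p :=
        p.inter_mem hBp (Ultrafilter.compl_mem_iff_notMem.2 hDnot)
      refine p.toFilter.mem_of_superset this ?_
      rintro n ⟨hnB, hnc⟩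
      simp only [Set.mem_compl_iff, Set.mem_setOf_eq, not_and, not_lt] at hnc
      exact ⟨n, hnB, Nat.le_add_left n m, by have := hnc hnB; omega⟩
    refine q.toFilter.mem_of_superset Filter.univ_mem ?_
    intro m _
    exact this m
  · -- counting
    intro i hi
    set k : ℕ := Nat.log 2 i with hk
    have h2k : 2 ^ k ≤ i := Nat.pow_log_le_self 2 (by omega : i ≠ 0) -- fix below
    have hik : i < 2 ^ (k + 1) := Nat.lt_pow_succ_log_self (by norm_num) i
    set N : ℕ := f i with hN
    have hfinBN : (B ∩ Set.Iio N : Set ℕ).Finite :=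
      Set.Finite.subset (Set.finite_Iio _) Set.inter_subset_right
    set t : ℕ := (B ∩ Set.Iio N).ncard with ht
    -- t ≤ k
    have htk : t ≤ k := by
      have hfN : N ≤ F (2 ^ (k + 1)) := by
        apply Finset.le_sup
        simp only [Finset.mem_range]
        omega
      have hsub : B ∩ Set.Iio N ⊆ B ∩ Set.Iio (F (2 ^ (k + 1))) :=
        Set.inter_subset_inter_right _ (Set.Iio_subset_Iio hfN)
      have hfin2 : (B ∩ Set.Iio (F (2 ^ (k + 1))) : Set ℕ).Finite :=
        Set.Finite.subset (Set.finite_Iio _) Set.inter_subset_right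
      have := Set.ncard_le_ncard hsub hfin2
      have := hB (k + 1) (Nat.succ_pos k)
      omega
    -- A ∩ Iio N ⊆ finite biUnion
    set S : Finset ℕ := hfinBN.toFinset with hS
    have hsub : A ∩ Set.Iio N ⊆ ↑(S.biUnion fun n => Finset.Icc n (n + c n)) := by
      rintro x ⟨⟨n, hnB, hnx, hxc⟩, hxN⟩
      simp only [Finset.coe_biUnion, Set.mem_iUnion, Finset.mem_coe, Finset.mem_Icc]
      exact ⟨n, by simp [hS, Set.Finite.mem_toFinset]; exact ⟨hnB, lt_of_le_of_lt hnx hxN⟩,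
        hnx, hxc⟩
    have hcard1 : (A ∩ Set.Iio N).ncard ≤ (S.biUnion fun n => Finset.Icc n (n + c n)).card := by
      have := Set.ncard_le_ncard hsub (Finset.finite_toSet _)
      rwa [Set.ncard_coe_finset] at this
    have hcard2 : (S.biUnion fun n => Finset.Icc n (n + c n)).card ≤
        ∑ n ∈ S, (c n + 1) := by
      refine le_trans (Finset.card_biUnion_le) ?_
      apply Finset.sum_le_sum
      intro n _
      rw [Nat.card_Icc]
      omega
    -- each c n < t for n ∈ S, and c injective on S
    have hcn : ∀ n ∈ S, c n < t := by
      intro n hn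
      rw [hS, Set.Finite.mem_toFinset] at hn
      have hsub2 : insert n (B ∩ Set.Iio n) ⊆ B ∩ Set.Iio N := by
        intro x hx
        rcases hx with rfl | ⟨hxB, hxlt⟩
        · exact hn
        · exact ⟨hxB, show x < N from lt_trans hxlt hn.2⟩
      have h1 : (insert n (B ∩ Set.Iio n)).ncard = c n + 1 :=
        Set.ncard_insert_of_notMem (fun h => lt_irrefl n h.2)
          (Set.Finite.subset (Set.finite_Iio _) Set.inter_subset_right)
      have := Set.ncard_le_ncard hsub2 hfinBN
      omega
    have hinj : ∀ a ∈ S, ∀ b ∈ S, c a = c b → a = b := by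
      intro a ha b hb hab
      rw [hS, Set.Finite.mem_toFinset] at ha hb
      by_contra hne
      rcases Nat.lt_or_ge a b with h | h
      · exact absurd hab (Nat.ne_of_lt (hcmono a ha.1 b h))
      · have : b < a := lt_of_le_of_ne h (Ne.symm hne)
        exact absurd hab.symm (Nat.ne_of_lt (hcmono b hb.1 a this))
    have himg : S.image c ⊆ Finset.range t := by
      intro j hj
      simp only [Finset.mem_image] at hj
      obtain ⟨n, hn, rfl⟩ := hj
      exact Finset.mem_range.2 (hcn n hn)
    have hcard3 : ∑ n ∈ S, (c n + 1) ≤ ∑ j ∈ Finset.range t, (j + 1) :=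
      calc ∑ n ∈ S, (c n + 1) = ∑ j ∈ S.image c, (j + 1) := (Finset.sum_image hinj).symm
        _ ≤ ∑ j ∈ Finset.range t, (j + 1) := Finset.sum_le_sum_of_subset himg
    have hgauss : (∑ j ∈ Finset.range t, (j + 1)) * 2 = (t + 1) * t := by
      have : ∑ j ∈ Finset.range (t + 1), j = ∑ j ∈ Finset.range t, (j + 1) := by
        rw [Finset.sum_range_succ']
        omega
      rw [← this, Finset.sum_range_id_mul_two]
      simp [Nat.mul_comm]
    have hpow : (t + 1) * t ≤ (k + 1) * k := Nat.mul_le_mul (by omega) htk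
    have := aux_pow k
    omega
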